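/- arXiv:1902.04648 — 3 statements merged into one kernel-verified Lean document; each statement's English description precedes it below -/
import Mathlib

section
/- Consider the one-dimensional locally conservative two-layer shallow-water shock conditions with constant total height: with left states h_{1,l}, h_{2,l} > 0, bulk momentum zero so that h_{1,l} u_{1,l} + h_{2,l} u_{2,l} = 0, shock speed S = u_{2,l} = -(h_{1,l}/h_{2,l}) u_{1,l}, densities 0 < ρ_1 < ρ_2, δ = (ρ_2 - ρ_1)/ρ_2, and g > 0. If S satisfies the Rankine-Hugoniot relation S(ρ_2 S + ρ_1 (h_{2,l}/h_{1,l}) S) = (1/2)(ρ_2 S² - ρ_1 (h_{2,l}²/h_{1,l}²) S²) + (ρ_2 - ρ_1) g h_{2,l}, then the squared Froude number Fr² = S²/(g δ h_{2,l}) equals 2(1-α)²/(1 - δ α(2-α)), where α = h_{2,l}/(h_{1,l} + h_{2,l}). -/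
/-- Froude number at the leading edge from the locally conservative 2LSWE
with constant total height. -/
theorem froude_locally_conservative_2LSWE
    (h1l h2l u1l u2l S ρ1 ρ2 δ g α : ℝ)
    (hh1 : 0 < h1l) (hh2 : 0 < h2l)
    (hρ1 : 0 < ρ1) (hρ12 : ρ1 < ρ2)
    (hδ : δ = (ρ2 - ρ1) / ρ2) (hg : 0 < g)
    (hmom : h1l * u1l + h2l * u2l = 0)
    (hS : S = u2l) (hS' : S = -(h1l / h2l) * u1l)
    (hα : α = h2l / (h1l + h2l))
    (hRH : S * (ρ2 * S + ρ1 * (h2l / h1l) * S) =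
      (1 / 2) * (ρ2 * S ^ 2 - ρ1 * (h2l ^ 2 / h1l ^ 2) * S ^ 2)
        + (ρ2 - ρ1) * g * h2l) :
    S ^ 2 / (g * δ * h2l) = 2 * (1 - α) ^ 2 / (1 - δ * α * (2 - α)) := by
  have hρ2 : 0 < ρ2 := hρ1.trans hρ12
  have h1ne : h1l ≠ 0 := hh1.ne'
  have h2ne : h2l ≠ 0 := hh2.ne'
  have hρ2ne : ρ2 ≠ 0 := hρ2.ne'
  have hsum : 0 < h1l + h2l := by linarith
  have hD : 0 < ρ2 * h1l ^ 2 + ρ1 * h2l * (2 * h1l + h2l) := by positivity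
  have hS2 : S ^ 2 * (ρ2 * h1l ^ 2 + ρ1 * h2l * (2 * h1l + h2l))
      = 2 * (ρ2 - ρ1) * g * h2l * h1l ^ 2 := by
    field_simp at hRH
    apply mul_left_cancel₀ h1ne
    linear_combination h1l * hRH
  have hδpos : 0 < δ := by rw [hδ]; exact div_pos (by linarith) hρ2
  have hden : 1 - δ * α * (2 - α)
      = (ρ2 * h1l ^ 2 + ρ1 * h2l * (2 * h1l + h2l)) / (ρ2 * (h1l + h2l) ^ 2) := by
    rw [hδ, hα]; field_simp; ring
  rw [hden, hα, div_eq_div_iff (mul_pos (mul_pos hg hδpos) hh2).ne' (div_pos hD (by positivity)).ne']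
  field_simp
  rw [hδ]
  field_simp
  linear_combination hS2
end

section
/- For the locally conservative one-layer dam-break solution, the shock at x(t) = 2c_0 t/(1+√2) connects the plateau state (h_l, u_l) = (4h_0/(2+√2)², 2c_0/(1+√2)) to the dry state (h_r, u_r) = (0, 0), and satisfies the Rankine-Hugoniot conditions S[[h]] = [[hu]] and S[[u]] = [[u²/2 + δ g h]] with shock speed S = 2c_0/(1+√2), where c_0 = √(δ g h_0). -/
/-- The leading-edge shock of the locally conservative dam-break solution satisfies
the Rankine-Hugoniot conditions with speed `S = 2c₀/(1+√2)`. -/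
theorem dam_break_shock_rankine_hugoniot
    (h0 δ g c0 hl ul hr ur S : ℝ)
    (hh0 : 0 < h0) (hδ0 : 0 < δ) (hδ1 : δ ≤ 1) (hg : 0 < g)
    (hc0 : c0 = Real.sqrt (δ * g * h0))
    (hhl : hl = 4 * h0 / (2 + Real.sqrt 2) ^ 2)
    (hul : ul = 2 * c0 / (1 + Real.sqrt 2))
    (hhr : hr = 0) (hur : ur = 0)
    (hS : S = 2 * c0 / (1 + Real.sqrt 2)) :
    S * (hr - hl) = hr * ur - hl * ul ∧
    S * (ur - ul) = (ur ^ 2 / 2 + δ * g * hr) - (ul ^ 2 / 2 + δ * g * hl) := by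
  have hs2 : Real.sqrt 2 ^ 2 = 2 := Real.sq_sqrt (by norm_num)
  have hc2 : c0 ^ 2 = δ * g * h0 := by
    rw [hc0, Real.sq_sqrt (by positivity)]
  have hpos : (0:ℝ) < 1 + Real.sqrt 2 := by positivity
  have hkey : (2 + Real.sqrt 2) ^ 2 = 2 * (1 + Real.sqrt 2) ^ 2 := by
    linear_combination -hs2
  subst hul hhr hur hS
  rw [hhl, hkey]
  constructor
  · ring
  · field_simp
    ring_nf
    linear_combination (-4) * hc2
end

section
/- Given the jump condition [[ρ_1^{d-1} h_1 + ρ_2^{d-1} h_2]] = (ρ_2^{d-1}/g)·γ·[[h_d]]·(S - <u_d>)², the Rankine-Hugoniot condition for the shallow layer velocity S[[u_s]] = [[ (u_s)²/2 + g(ρ_1/ρ_2)^{s-1} h_1 + g h_2 ]] can be rewritten as S[[u_s]] = [[ (u_s)²/2 + δ g h_s ]] + (ρ_1/ρ_2)^{s-1} γ [[h_d]](S - <u_d>)², where δ = 1 - ρ_1/ρ_2, s ∈ {1,2}, d = 3 - s, and γ = 1/<h_d>. -/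
/-- Rewriting the shallow-layer velocity Rankine-Hugoniot condition using the
deep-layer jump condition, with `δ = 1 - ρ₁/ρ₂`. -/
theorem shallow_layer_velocity_jump_rewrite
    (s d : ℕ) (hs : s = 1 ∨ s = 2) (hd : d = 3 - s)
    (ρ1 ρ2 g S δ γ : ℝ) (hρ1 : 0 < ρ1) (hρ12 : ρ1 < ρ2) (hg : 0 < g)
    (hδ : δ = 1 - ρ1 / ρ2)
    (hl hr ul ur : ℕ → ℝ)
    (havg : 0 < (hl d + hr d) / 2)
    (hγ : γ = 1 / ((hl d + hr d) / 2))
    (hjump : (ρ1 ^ (d - 1) * hr 1 + ρ2 ^ (d - 1) * hr 2)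
        - (ρ1 ^ (d - 1) * hl 1 + ρ2 ^ (d - 1) * hl 2) =
      (ρ2 ^ (d - 1) / g) * γ * (hr d - hl d) * (S - (ul d + ur d) / 2) ^ 2)
    (hRHs : S * (ur s - ul s) =
      ((ur s) ^ 2 / 2 + g * (ρ1 / ρ2) ^ (s - 1) * hr 1 + g * hr 2)
        - ((ul s) ^ 2 / 2 + g * (ρ1 / ρ2) ^ (s - 1) * hl 1 + g * hl 2)) :
    S * (ur s - ul s) =
      (((ur s) ^ 2 / 2 + δ * g * hr s) - ((ul s) ^ 2 / 2 + δ * g * hl s))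
        + (ρ1 / ρ2) ^ (s - 1) * γ * (hr d - hl d)
          * (S - (ul d + ur d) / 2) ^ 2 := by
  have hρ2 : ρ2 ≠ 0 := (hρ1.trans hρ12).ne'
  have hg' : g ≠ 0 := hg.ne'
  subst hδ
  rcases hs with h | h <;> subst h <;> subst hd <;> norm_num at hjump hRHs ⊢
  · linear_combination (norm := (field_simp; ring)) hRHs + (g/ρ2) * hjump
  · linear_combination (norm := (field_simp; ring)) hRHs + (ρ1*g/ρ2) * hjump
end
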